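/- Let K ≥ 1, let U and V partition [K], and for each i ∈ [K] let f_i, g_i : (0,∞) → ℝ be differentiable. For p, p̄, p' ∈ (0,∞)^K, suppose there exist constants c_U, c_V ∈ ℝ with g_i'(p̄_i) − g_i'(p'_i) = c_V for all i ∈ V and g_i'(p̄_i) − g_i'(p'_i) = c_U for all i ∈ U, and suppose ∑_{i∈V} p_i = ∑_{i∈V} p̄_i and ∑_{i∈U} p_i = ∑_{i∈U} p̄_i. Then D^{t,t+1}_{[K]}(p, p') = D^{t,t+1}_V(p, p̄) + D^{t,t+1}_U(p, p̄) + D^{t+1}_{[K]}(p̄, p'), where for an index set I, D^{t,t+1}_I(x, y) = ∑_{i∈I} ( f_i(x_i) − g_i(y_i) − g_i'(y_i)(x_i − y_i) ) and D^{t+1}_I(x, y) = ∑_{i∈I} ( g_i(x_i) − g_i(y_i) − g_i'(y_i)(x_i − y_i) ). -/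

import Mathlib

/-- Lemma 4.3 (`main_decomp`): decomposition of the skewed Bregman divergence. -/
theorem skewed_bregman_decomposition
    (K : ℕ) (hK : 1 ≤ K)
    (U V : Finset (Fin K)) (hdisj : Disjoint U V) (hcover : U ∪ V = Finset.univ)
    (f g f' g' : Fin K → ℝ → ℝ)
    (hf : ∀ i, ∀ u ∈ Set.Ioi (0 : ℝ), HasDerivAt (f i) (f' i u) u)
    (hg : ∀ i, ∀ u ∈ Set.Ioi (0 : ℝ), HasDerivAt (g i) (g' i u) u)
    (p pbar p' : Fin K → ℝ)
    (hp : ∀ i, 0 < p i) (hpbar : ∀ i, 0 < pbar i) (hp' : ∀ i, 0 < p' i)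
    (cU cV : ℝ)
    (hV : ∀ i ∈ V, g' i (pbar i) - g' i (p' i) = cV)
    (hU : ∀ i ∈ U, g' i (pbar i) - g' i (p' i) = cU)
    (hsumV : ∑ i ∈ V, p i = ∑ i ∈ V, pbar i)
    (hsumU : ∑ i ∈ U, p i = ∑ i ∈ U, pbar i) :
    ∑ i, (f i (p i) - g i (p' i) - g' i (p' i) * (p i - p' i))
      = (∑ i ∈ V, (f i (p i) - g i (pbar i) - g' i (pbar i) * (p i - pbar i)))
        + (∑ i ∈ U, (f i (p i) - g i (pbar i) - g' i (pbar i) * (p i - pbar i)))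
        + (∑ i, (g i (pbar i) - g i (p' i) - g' i (p' i) * (pbar i - p' i))) := by
  have key : ∀ (S : Finset (Fin K)) (c : ℝ),
      (∀ i ∈ S, g' i (pbar i) - g' i (p' i) = c) →
      (∑ i ∈ S, p i = ∑ i ∈ S, pbar i) →
      ∑ i ∈ S, (f i (p i) - g i (p' i) - g' i (p' i) * (p i - p' i))
        = ∑ i ∈ S, (f i (p i) - g i (pbar i) - g' i (pbar i) * (p i - pbar i))
          + ∑ i ∈ S, (g i (pbar i) - g i (p' i) - g' i (p' i) * (pbar i - p' i)) := by
    intro S c hc hs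
    have h1 : ∑ i ∈ S, ((f i (p i) - g i (p' i) - g' i (p' i) * (p i - p' i))
        - ((f i (p i) - g i (pbar i) - g' i (pbar i) * (p i - pbar i))
          + (g i (pbar i) - g i (p' i) - g' i (p' i) * (pbar i - p' i))))
        = ∑ i ∈ S, c * (p i - pbar i) :=
      Finset.sum_congr rfl fun i hi => by rw [← hc i hi]; ring
    have h2 : ∑ i ∈ S, c * (p i - pbar i) = 0 := by
      rw [← Finset.mul_sum, Finset.sum_sub_distrib, hs, sub_self, mul_zero]
    rw [h2, Finset.sum_sub_distrib, sub_eq_zero, Finset.sum_add_distrib] at h1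
    exact h1
  have hsplit : ∀ h : Fin K → ℝ, ∑ i, h i = ∑ i ∈ U, h i + ∑ i ∈ V, h i := by
    intro h; rw [← hcover, Finset.sum_union hdisj]
  rw [hsplit, hsplit, key U cU hU hsumU, key V cV hV hsumV]
  ring
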